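/- Let χ and χ' be two non-Archimedean norms on an n-dimensional complex vector space V. Then there exists a basis e = (e₁,…,eₙ) of V that simultaneously diagonalizes both χ and χ'; that is, any two points of the space of non-Archimedean norms belong to a common apartment. -/

import Mathlib

/-- A non-Archimedean norm (additive notation, trivial absolute value on `ℂ`). -/
def IsNANorm {V : Type*} [AddCommGroup V] [Module ℂ V] (χ : V → EReal) : Prop :=
  (∀ v w : V, min (χ v) (χ w) ≤ χ (v + w)) ∧
  (∀ (a : ℂ) (v : V), a ≠ 0 → χ (a • v) = χ v) ∧
  (∀ v : V, χ v = ⊤ ↔ v = 0) ∧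
  (∀ v : V, χ v ≠ ⊥)

/-- `χ` is diagonalized by the basis `b` if `χ(∑ aᵢ eᵢ) = min {χ(eᵢ) : aᵢ ≠ 0}`. -/
def DiagonalizedBy {V : Type*} [AddCommGroup V] [Module ℂ V] {n : ℕ}
    (b : Module.Basis (Fin n) ℂ V) (χ : V → EReal) : Prop :=
  ∀ a : Fin n → ℂ, χ (∑ i, a i • b i) = ⨅ (i : Fin n) (_ : a i ≠ 0), χ (b i)

namespace NACommon

variable {V : Type*} [AddCommGroup V] [Module ℂ V] {χ χ' : V → EReal}

lemma zero_top (h : IsNANorm χ) : χ 0 = ⊤ := (h.2.2.1 0).mpr rfl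

lemma neg_eq (h : IsNANorm χ) (v : V) : χ (-v) = χ v := by
  have := h.2.1 (-1) v (by norm_num)
  simpa using this

lemma sub_ge (h : IsNANorm χ) (v w : V) : min (χ v) (χ w) ≤ χ (v - w) := by
  have := h.1 v (-w)
  rw [neg_eq h w] at this
  simpa [sub_eq_add_neg] using this

lemma smul_ge (h : IsNANorm χ) (a : ℂ) (v : V) : χ v ≤ χ (a • v) := by
  rcases eq_or_ne a 0 with rfl | ha
  · simp [zero_top h]
  · rw [h.2.1 a v ha]

/-- iInf-form ultrametric inequality for finite sums. -/
lemma sum_ge (h : IsNANorm χ) {ι : Type*} (f : ι → V) (a : ι → ℂ) (s : Finset ι) :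
    (⨅ i ∈ s, ⨅ (_ : a i ≠ 0), χ (f i)) ≤ χ (∑ i ∈ s, a i • f i) := by
  classical
  induction s using Finset.induction_on with
  | empty => simp [zero_top h]
  | @insert j s hj ih =>
    rw [Finset.sum_insert hj]
    refine le_trans ?_ (h.1 (a j • f j) (∑ i ∈ s, a i • f i))
    rw [Finset.iInf_insert]
    refine min_le_min ?_ ih
    rcases eq_or_ne (a j) 0 with hz | hz
    · simp [hz, zero_top h, smul_ge h]
    · rw [iInf_pos hz, h.2.1 _ _ hz]

lemma iInf_fin_succ {α : Type*} [CompleteLattice α] {n : ℕ} (g : Fin (n+1) → α) :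
    ⨅ i, g i = g 0 ⊓ ⨅ i : Fin n, g i.succ := by
  refine le_antisymm (le_inf (iInf_le _ 0) (le_iInf fun i => iInf_le _ i.succ)) ?_
  exact le_iInf fun i =>
    Fin.cases inf_le_left (fun j => le_trans inf_le_right (iInf_le _ j)) i

/-- The submodule of vectors with `χ`-value at least `t`. -/
def levelSub (h : IsNANorm χ) (t : EReal) : Submodule ℂ V where
  carrier := {v | t ≤ χ v}
  add_mem' {v w} hv hw := le_trans (le_min hv hw) (h.1 v w)
  zero_mem' := by simp [Set.mem_setOf_eq, zero_top h]
  smul_mem' a v hv := le_trans hv (smul_ge h a v)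

/-- On a nontrivial finite-dimensional space, `χ` attains a maximum on nonzero vectors. -/
lemma exists_max [FiniteDimensional ℂ V] [Nontrivial V] (h : IsNANorm χ) :
    ∃ e : V, e ≠ 0 ∧ ∀ v : V, v ≠ 0 → χ v ≤ χ e := by
  classical
  set S : Set EReal := χ '' {v | v ≠ 0} with hS
  have hSne : S.Nonempty := by
    obtain ⟨v, hv⟩ := exists_ne (0 : V)
    exact ⟨χ v, v, hv, rfl⟩
  have hfin : S.Finite := by
    have key : ∀ t t' : EReal, t ∈ S → t < t' →
        Module.finrank ℂ (levelSub h t') < Module.finrank ℂ (levelSub h t) := by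
      rintro t t' ⟨v, hv0, hvval⟩ hlt
      have hle : levelSub h t' ≤ levelSub h t := fun w hw => le_trans hlt.le hw
      have hlt2 : levelSub h t' < levelSub h t := by
        refine lt_of_le_of_ne hle ?_
        intro habs
        have hv1 : v ∈ levelSub h t := le_of_eq hvval.symm
        rw [← habs] at hv1
        exact absurd (le_trans hv1 hvval.le) (not_le.mpr hlt)
      exact Submodule.finrank_lt_finrank_of_lt hlt2
    have hinj : Set.InjOn (fun t => Module.finrank ℂ (levelSub h t)) S := by
      rintro t ht t' ht' heq
      by_contra hne
      rcases lt_or_gt_of_ne hne with hlt | hlt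
      · exact absurd heq (ne_of_gt (key t t' ht hlt))
      · exact absurd heq (ne_of_lt (key t' t ht' hlt))
    have himfin : ((fun t => Module.finrank ℂ (levelSub h t)) '' S).Finite :=
      Set.Finite.subset (Set.finite_Iic (Module.finrank ℂ V)) (by
        rintro k ⟨t, _, rfl⟩
        exact Submodule.finrank_le _)
    exact Set.Finite.of_finite_image himfin hinj
  obtain ⟨m, hmS, hmax⟩ := Set.exists_max_image S id hfin hSne
  obtain ⟨e, he0, heval⟩ := hmS
  exact ⟨e, he0, fun v hv => heval ▸ hmax (χ v) ⟨v, hv, rfl⟩⟩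

end NACommon
namespace NACommon

variable {V : Type*} [AddCommGroup V] [Module ℂ V] {χ χ' : V → EReal}

/-- If a coset value is not maximal, it equals `χ e`. -/
lemma eq_of_lt_coset (h : IsNANorm χ) (e v : V) {c d : ℂ}
    (hlt : χ (v + c • e) < χ (v + d • e)) : χ (v + c • e) = χ e := by
  have hcd : c ≠ d := by rintro rfl; exact lt_irrefl _ hlt
  have hde : χ ((d - c) • e) = χ e := h.2.1 _ _ (sub_ne_zero.mpr (Ne.symm hcd))
  have h1 : min (χ (v + d • e)) (χ ((d - c) • e)) ≤ χ (v + c • e) := by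
    have := sub_ge h (v + d • e) ((d - c) • e)
    have heq : (v + d • e) - (d - c) • e = v + c • e := by
      rw [sub_smul]; abel
    rwa [heq] at this
  have h2 : χ ((d - c) • e) ≤ χ e := le_of_eq hde
  -- χ e ≥ χ (v + c•e)
  have hge : χ (v + c • e) ≤ χ e := by
    rw [← hde]
    have := sub_ge h (v + d • e) (v + c • e)
    have heq : (v + d • e) - (v + c • e) = (d - c) • e := by
      rw [sub_smul]; abel
    rw [heq] at this
    exact le_trans (le_min hlt.le le_rfl) this
  -- χ e ≤ χ (v + c•e)
  have hle : χ e ≤ χ (v + c • e) := by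
    rcases le_or_gt (χ ((d - c) • e)) (χ (v + d • e)) with hh | hh
    · rw [← hde]; exact le_trans (min_eq_right hh ▸ h1 : _) le_rfl
    · exact absurd (lt_of_le_of_lt (min_eq_left hh.le ▸ h1) hlt) (lt_irrefl _)
  exact le_antisymm hge hle

/-- The maximum of `χ` over a coset `v + ℂe` is attained. -/
lemma coset_attain (h : IsNANorm χ) (e v : V) :
    ∃ c : ℂ, ∀ d : ℂ, χ (v + d • e) ≤ χ (v + c • e) := by
  by_contra habs
  push_neg at habs
  have key : ∀ c : ℂ, χ (v + c • e) = χ e := by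
    intro c
    obtain ⟨d, hd⟩ := habs c
    exact eq_of_lt_coset h e v hd
  obtain ⟨d, hd⟩ := habs 0
  rw [key 0, key d] at hd
  exact lt_irrefl _ hd

/-- Simultaneous attainment: if `e` maximizes `χ`, then a `χ'`-maximizer over the coset of
`v ∉ ℂe` also maximizes `χ`. -/
lemma coset_attain₂ (h : IsNANorm χ) (h' : IsNANorm χ') {e : V} (he : e ≠ 0)
    (hmax : ∀ w : V, w ≠ 0 → χ w ≤ χ e) (v : V) (hv : v ∉ Submodule.span ℂ {e}) :
    ∃ c : ℂ, (∀ d : ℂ, χ (v + d • e) ≤ χ (v + c • e)) ∧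
      (∀ d : ℂ, χ' (v + d • e) ≤ χ' (v + c • e)) := by
  obtain ⟨c₀, hc₀⟩ := coset_attain h e v
  obtain ⟨c₁, hc₁⟩ := coset_attain h' e v
  refine ⟨c₁, fun d => ?_, hc₁⟩
  refine le_trans (hc₀ d) ?_
  rcases eq_or_ne c₁ c₀ with rfl | hne
  · exact le_rfl
  have hvc₀ : v + c₀ • e ≠ 0 := by
    intro habs
    have hveq : v = (-c₀) • e := by
      rw [neg_smul]
      exact eq_neg_of_add_eq_zero_left habs
    exact hv (hveq ▸ Submodule.smul_mem _ _ (Submodule.mem_span_singleton_self e))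
  have h1 : min (χ (v + c₀ • e)) (χ ((c₁ - c₀) • e)) ≤ χ (v + c₁ • e) := by
    have := h.1 (v + c₀ • e) ((c₁ - c₀) • e)
    have heq : (v + c₀ • e) + (c₁ - c₀) • e = v + c₁ • e := by rw [sub_smul]; abel
    rwa [heq] at this
  have h2 : χ ((c₁ - c₀) • e) = χ e := h.2.1 _ _ (sub_ne_zero.mpr hne)
  rw [h2, min_eq_left (hmax _ hvc₀)] at h1
  exact h1

variable (χ) in
/-- The quotient norm on `V ⧸ ℂe`. -/
noncomputable def qnorm (e : V) : (V ⧸ Submodule.span ℂ {e}) → EReal :=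
  fun x => sSup (χ '' {v | (Submodule.span ℂ {e}).mkQ v = x})

lemma le_qnorm (e v : V) : χ v ≤ qnorm χ e ((Submodule.span ℂ {e}).mkQ v) :=
  le_sSup ⟨v, rfl, rfl⟩

/-- Any coset has a representative attaining the quotient norm. -/
lemma qnorm_attain (h : IsNANorm χ) (e : V) (x : V ⧸ Submodule.span ℂ {e}) :
    ∃ v : V, (Submodule.span ℂ {e}).mkQ v = x ∧ χ v = qnorm χ e x := by
  obtain ⟨v₀, hv₀⟩ := Submodule.mkQ_surjective _ x
  obtain ⟨c, hc⟩ := coset_attain h e v₀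
  refine ⟨v₀ + c • e, ?_, ?_⟩
  · rw [map_add, map_smul, Submodule.mkQ_apply (Submodule.span ℂ {e}) e,
      (Submodule.Quotient.mk_eq_zero _).mpr (Submodule.mem_span_singleton_self e)]
    simp [hv₀]
  · refine le_antisymm ?_ ?_
    · have := le_qnorm (χ := χ) e (v₀ + c • e)
      rwa [show (Submodule.span ℂ {e}).mkQ (v₀ + c • e) = x from by
        rw [map_add, map_smul, Submodule.mkQ_apply (Submodule.span ℂ {e}) e,
          (Submodule.Quotient.mk_eq_zero _).mpr (Submodule.mem_span_singleton_self e)]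
        simp [hv₀]] at this
    · refine sSup_le ?_
      rintro t ⟨w, hw, rfl⟩
      have : (Submodule.span ℂ {e}).mkQ w = (Submodule.span ℂ {e}).mkQ v₀ := by
        rw [hw, hv₀]
      rw [Submodule.mkQ_apply, Submodule.mkQ_apply, Submodule.Quotient.eq,
        Submodule.mem_span_singleton] at this
      obtain ⟨d, hd⟩ := this
      have hwd : w = v₀ + d • e := by rw [hd]; abel
      rw [hwd]
      exact hc d

end NACommon
namespace NACommon

variable {V : Type*} [AddCommGroup V] [Module ℂ V] {χ χ' : V → EReal}

/-- Simultaneous attainment of both quotient norms on a nonzero coset, when `e` is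
`χ`-maximal. -/
lemma qnorm_attain₂ (h : IsNANorm χ) (h' : IsNANorm χ') {e : V} (he : e ≠ 0)
    (hmax : ∀ w : V, w ≠ 0 → χ w ≤ χ e) (x : V ⧸ Submodule.span ℂ {e}) (hx : x ≠ 0) :
    ∃ v : V, (Submodule.span ℂ {e}).mkQ v = x ∧ χ v = qnorm χ e x ∧ χ' v = qnorm χ' e x := by
  obtain ⟨v₀, hv₀⟩ := Submodule.mkQ_surjective _ x
  have hv₀span : v₀ ∉ Submodule.span ℂ {e} := by
    intro habs
    exact hx (by rw [← hv₀, Submodule.mkQ_apply, (Submodule.Quotient.mk_eq_zero _).mpr habs])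
  obtain ⟨c, hc, hc'⟩ := coset_attain₂ h h' he hmax v₀ hv₀span
  have hmk : (Submodule.span ℂ {e}).mkQ (v₀ + c • e) = x := by
    rw [map_add, map_smul, Submodule.mkQ_apply (Submodule.span ℂ {e}) e,
      (Submodule.Quotient.mk_eq_zero _).mpr (Submodule.mem_span_singleton_self e)]
    simp [hv₀]
  have hrep : ∀ w : V, (Submodule.span ℂ {e}).mkQ w = x → ∃ d : ℂ, w = v₀ + d • e := by
    intro w hw
    have : (Submodule.span ℂ {e}).mkQ w = (Submodule.span ℂ {e}).mkQ v₀ := by rw [hw, hv₀]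
    rw [Submodule.mkQ_apply, Submodule.mkQ_apply, Submodule.Quotient.eq,
      Submodule.mem_span_singleton] at this
    obtain ⟨d, hd⟩ := this
    exact ⟨d, by rw [hd]; abel⟩
  refine ⟨v₀ + c • e, hmk, ?_, ?_⟩
  · refine le_antisymm (hmk ▸ le_qnorm e (v₀ + c • e)) (sSup_le ?_)
    rintro t ⟨w, hw, rfl⟩
    obtain ⟨d, rfl⟩ := hrep w hw
    exact hc d
  · refine le_antisymm (hmk ▸ le_qnorm e (v₀ + c • e)) (sSup_le ?_)
    rintro t ⟨w, hw, rfl⟩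
    obtain ⟨d, rfl⟩ := hrep w hw
    exact hc' d

lemma qnorm_zero (h : IsNANorm χ) (e : V) : qnorm χ e 0 = ⊤ := by
  refine top_le_iff.mp ?_
  have := le_qnorm (χ := χ) e 0
  rwa [map_zero, zero_top h] at this

lemma qnorm_isNA (h : IsNANorm χ) (e : V) : IsNANorm (qnorm χ e) := by
  refine ⟨?_, ?_, ?_, ?_⟩
  · intro x y
    rcases eq_or_ne x 0 with rfl | hx
    · rw [qnorm_zero h, zero_add]; exact min_le_right _ _
    rcases eq_or_ne y 0 with rfl | hy
    · rw [qnorm_zero h, add_zero]; exact min_le_left _ _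
    obtain ⟨u, hu, huv⟩ := qnorm_attain h e x
    obtain ⟨w, hw, hwv⟩ := qnorm_attain h e y
    calc min (qnorm χ e x) (qnorm χ e y) = min (χ u) (χ w) := by rw [huv, hwv]
      _ ≤ χ (u + w) := h.1 u w
      _ ≤ qnorm χ e ((Submodule.span ℂ {e}).mkQ (u + w)) := le_qnorm e (u + w)
      _ = qnorm χ e (x + y) := by rw [map_add, hu, hw]
  · have key : ∀ (a : ℂ) (x : V ⧸ Submodule.span ℂ {e}), a ≠ 0 →
        qnorm χ e x ≤ qnorm χ e (a • x) := by
      intro a x ha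
      obtain ⟨u, hu, huv⟩ := qnorm_attain h e x
      calc qnorm χ e x = χ u := huv.symm
        _ = χ (a • u) := (h.2.1 a u ha).symm
        _ ≤ qnorm χ e ((Submodule.span ℂ {e}).mkQ (a • u)) := le_qnorm e _
        _ = qnorm χ e (a • x) := by rw [map_smul, hu]
    intro a x ha
    refine le_antisymm ?_ (key a x ha)
    have := key a⁻¹ (a • x) (inv_ne_zero ha)
    rwa [inv_smul_smul₀ ha] at this
  · intro x
    constructor
    · intro hx
      obtain ⟨u, hu, huv⟩ := qnorm_attain h e x
      have : u = 0 := (h.2.2.1 u).mp (by rw [huv, hx])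
      rw [← hu, this, map_zero]
    · rintro rfl; exact qnorm_zero h e
  · intro x
    obtain ⟨u, hu, huv⟩ := qnorm_attain h e x
    rw [← huv]
    exact h.2.2.2 u

end NACommon
namespace NACommon

variable {V : Type*} [AddCommGroup V] [Module ℂ V] {χ : V → EReal}

/-- If a basis of the quotient by `ℂe` diagonalizes the quotient norm and we lift its
vectors attaining the quotient norm, then prepending `e` gives a diagonalizing basis. -/
lemma diag_lift {n : ℕ} (h : IsNANorm χ) {e : V}
    (χQ : (V ⧸ Submodule.span ℂ {e}) → EReal)
    (hle : ∀ u : V, χ u ≤ χQ ((Submodule.span ℂ {e}).mkQ u))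
    (bQ : Module.Basis (Fin n) ℂ (V ⧸ Submodule.span ℂ {e}))
    (hdiag : DiagonalizedBy bQ χQ)
    (v : Fin n → V) (hmk : ∀ i, (Submodule.span ℂ {e}).mkQ (v i) = bQ i)
    (hval : ∀ i, χ (v i) = χQ (bQ i))
    (b : Module.Basis (Fin (n+1)) ℂ V) (hb : ⇑b = Fin.cons e v) :
    DiagonalizedBy b χ := by
  intro a
  set S : V := ∑ i : Fin n, a i.succ • v i with hS
  have hsum : ∑ i, a i • b i = a 0 • e + S := by
    rw [Fin.sum_univ_succ, hb]
    simp [hS]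
  set T₁ : EReal := ⨅ (i : Fin n) (_ : a i.succ ≠ 0), χ (v i) with hT₁
  have hmkS : (Submodule.span ℂ {e}).mkQ S = ∑ i : Fin n, a i.succ • bQ i := by
    rw [hS, map_sum]
    simp [hmk]
  have hQS : χQ ((Submodule.span ℂ {e}).mkQ S) = T₁ := by
    rw [hmkS, hdiag (fun i => a i.succ), hT₁]
    exact iInf_congr fun i => iInf_congr fun hi => (hval i).symm
  have hSle : χ S ≤ T₁ := hQS ▸ hle S
  have hSge : T₁ ≤ χ S := by
    have := sum_ge h v (fun i => a i.succ) Finset.univ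
    simpa [hT₁, hS] using this
  have hSeq : χ S = T₁ := le_antisymm hSle hSge
  have hRHS : (⨅ (i : Fin (n+1)) (_ : a i ≠ 0), χ (b i))
      = (⨅ (_ : a 0 ≠ 0), χ e) ⊓ T₁ := by
    rw [iInf_fin_succ (fun i => ⨅ (_ : a i ≠ 0), χ (b i))]
    congr 1
    · rw [hb]; simp
    · rw [hT₁]
      exact iInf_congr fun i => iInf_congr fun hi => by rw [hb]; simp
  rw [hsum, hRHS]
  rcases eq_or_ne (a 0) 0 with h0 | h0
  · rw [h0, zero_smul, zero_add, hSeq, iInf_neg (by simp), top_inf_eq]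
  · rw [iInf_pos h0]
    have hmkv : (Submodule.span ℂ {e}).mkQ (a 0 • e + S) = (Submodule.span ℂ {e}).mkQ S := by
      rw [map_add, map_smul, Submodule.mkQ_apply _ e,
        (Submodule.Quotient.mk_eq_zero _).mpr (Submodule.mem_span_singleton_self e)]
      simp
    have hvle : χ (a 0 • e + S) ≤ T₁ := by
      have := hle (a 0 • e + S)
      rwa [hmkv, hQS] at this
    have hvge : min (χ e) T₁ ≤ χ (a 0 • e + S) := by
      refine le_trans (le_of_eq ?_) (h.1 (a 0 • e) S)
      rw [h.2.1 _ _ h0, hSeq]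
    rcases le_or_gt T₁ (χ e) with hte | hte
    · rw [min_eq_right hte]
      rw [min_eq_right hte] at hvge
      exact le_antisymm hvle hvge
    · rw [min_eq_left hte.le]
      rw [min_eq_left hte.le] at hvge
      refine le_antisymm ?_ hvge
      by_contra hlt
      push_neg at hlt
      have h1 : min (χ (a 0 • e + S)) (χ S) ≤ χ (a 0 • e) := by
        have := sub_ge h (a 0 • e + S) S
        simpa using this
      rw [h.2.1 _ _ h0] at h1
      exact lt_irrefl _ (lt_of_lt_of_le (lt_min hlt (hSeq ▸ hte)) h1)

end NACommon
namespace NACommon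

universe u

lemma main_aux : ∀ (n : ℕ) (V : Type u) [AddCommGroup V] [Module ℂ V] [FiniteDimensional ℂ V],
    Module.finrank ℂ V = n → ∀ χ χ' : V → EReal, IsNANorm χ → IsNANorm χ' →
    ∃ b : Module.Basis (Fin n) ℂ V, DiagonalizedBy b χ ∧ DiagonalizedBy b χ' := by
  intro n
  induction n with
  | zero =>
    intro V _ _ _ hrank χ χ' hχ hχ'
    have hsub : Subsingleton V := Module.finrank_zero_iff.mp hrank
    refine ⟨Module.Basis.empty _, fun a => ?_, fun a => ?_⟩
    · simp [Finset.univ_eq_empty, zero_top hχ, iInf_of_empty]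
    · simp [Finset.univ_eq_empty, zero_top hχ', iInf_of_empty]
  | succ n IH =>
    intro V _ _ _ hrank χ χ' hχ hχ'
    have hnt : Nontrivial V := Module.finrank_pos_iff (R := ℂ).mp (by omega)
    obtain ⟨e, he, hmax⟩ := exists_max hχ
    have hrankQ : Module.finrank ℂ (V ⧸ Submodule.span ℂ {e}) = n := by
      have h1 := Submodule.finrank_quotient_add_finrank (Submodule.span ℂ {e})
      rw [finrank_span_singleton he] at h1
      omega
    obtain ⟨bQ, hd, hd'⟩ := IH (V ⧸ Submodule.span ℂ {e}) hrankQ (qnorm χ e) (qnorm χ' e)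
      (qnorm_isNA hχ e) (qnorm_isNA hχ' e)
    choose v hmk hval hval' using
      fun i => qnorm_attain₂ hχ hχ' he hmax (bQ i) (bQ.ne_zero i)
    have hvli : LinearIndependent ℂ v := by
      refine LinearIndependent.of_comp ((Submodule.span ℂ {e}).mkQ) ?_
      have : (Submodule.span ℂ {e}).mkQ ∘ v = ⇑bQ := funext hmk
      rw [this]
      exact bQ.linearIndependent
    have hespan : e ∉ Submodule.span ℂ (Set.range v) := by
      intro habs
      rw [Submodule.mem_span_range_iff_exists_fun ℂ] at habs
      obtain ⟨c, hc⟩ := habs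
      have h0 : ∑ i, c i • bQ i = 0 := by
        have := congrArg ((Submodule.span ℂ {e}).mkQ) hc
        rw [map_sum] at this
        simp only [map_smul, hmk] at this
        rwa [Submodule.mkQ_apply,
          (Submodule.Quotient.mk_eq_zero _).mpr (Submodule.mem_span_singleton_self e)] at this
      have hc0 : ∀ i, c i = 0 := Fintype.linearIndependent_iff.mp bQ.linearIndependent c h0
      apply he
      rw [← hc]
      simp [hc0]
    have hli : LinearIndependent ℂ (Fin.cons e v : Fin (n+1) → V) :=
      linearIndependent_fin_cons.mpr ⟨hvli, hespan⟩
    have hcard : Fintype.card (Fin (n+1)) = Module.finrank ℂ V := by simp [hrank]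
    let b := basisOfLinearIndependentOfCardEqFinrank hli hcard
    have hb : ⇑b = Fin.cons e v := coe_basisOfLinearIndependentOfCardEqFinrank _ _
    exact ⟨b, diag_lift hχ _ (le_qnorm e) bQ hd v hmk hval b hb,
      diag_lift hχ' _ (le_qnorm e) bQ hd' v hmk hval' b hb⟩

end NACommon

/-- Any two non-Archimedean norms on a finite-dimensional complex vector space can be
simultaneously diagonalized: they belong to a common apartment. -/
theorem naNorms_common_apartment {V : Type*} [AddCommGroup V] [Module ℂ V]
    [FiniteDimensional ℂ V] (χ χ' : V → EReal)
    (hχ : IsNANorm χ) (hχ' : IsNANorm χ') :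
    ∃ b : Module.Basis (Fin (Module.finrank ℂ V)) ℂ V,
      DiagonalizedBy b χ ∧ DiagonalizedBy b χ' :=
  NACommon.main_aux (Module.finrank ℂ V) V rfl χ χ' hχ hχ'
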